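/- Let G be a connected graph, D = x_0,...,x_s a diameter, and P = v_0,...,v_t a shortest path of eccentricity k. Suppose v_l, v_m (l ≤ m) satisfy d(v_l,x_0) ≤ k and d(v_m,x_s) ≤ k, and suppose there is no index a ≤ i with d(v_a, D) ≤ k, where v_i is within distance k of some fixed vertex z. Then d(v_i, v_l) ≤ 2k, and consequently d(z, x_0) ≤ 4k. -/
import Mathlib


open SimpleGraph

variable {V : Type*}

/-- Distance from a vertex `x` to (the support of) a walk `p`. -/
noncomputable def walkDist (G : SimpleGraph V) {u v : V} (x : V) (p : G.Walk u v) : ℕ :=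
  sInf {n | ∃ w ∈ p.support, G.dist x w = n}

/-- A walk is a shortest path when its length equals the distance between its ends. -/
noncomputable def IsShortestPath (G : SimpleGraph V) {u v : V} (p : G.Walk u v) : Prop :=
  p.length = G.dist u v

/-- Eccentricity of a walk: the largest distance from any vertex to the walk. -/
noncomputable def walkEcc [Fintype V] (G : SimpleGraph V) {u v : V} (p : G.Walk u v) : ℕ :=
  sSup {n | ∃ x : V, walkDist G x p = n}

/-- A diameter: a shortest path of maximum length among all distances. -/
noncomputable def IsDiameter [Fintype V] (G : SimpleGraph V) {u v : V} (p : G.Walk u v) : Prop :=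
  IsShortestPath G p ∧ ∀ a b : V, G.dist a b ≤ p.length

/-- `k(G)`: minimum eccentricity over all shortest paths. -/
noncomputable def minK [Fintype V] (G : SimpleGraph V) : ℕ :=
  sInf {n | ∃ (u v : V) (p : G.Walk u v), IsShortestPath G p ∧ walkEcc G p = n}

/-- `l(G)`: minimum eccentricity over all diameters. -/
noncomputable def minL [Fintype V] (G : SimpleGraph V) : ℕ :=
  sInf {n | ∃ (u v : V) (p : G.Walk u v), IsDiameter G p ∧ walkEcc G p = n}

/-- `s(G)`: maximum eccentricity over all diameters. -/
noncomputable def maxS [Fintype V] (G : SimpleGraph V) : ℕ :=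
  sSup {n | ∃ (u v : V) (p : G.Walk u v), IsDiameter G p ∧ walkEcc G p = n}

/-- Distance between two vertices of a walk is at most the index difference. -/
lemma dist_getVert_le {G : SimpleGraph V} (hG : G.Connected) {u v : V} (p : G.Walk u v) :
    ∀ a b : ℕ, a ≤ b → b ≤ p.length → G.dist (p.getVert a) (p.getVert b) ≤ b - a := by
  intro a b
  induction b with
  | zero => intro hab _; interval_cases a; simp
  | succ b ih =>
    intro hab hbl
    rcases Nat.eq_or_lt_of_le hab with h | h
    · subst h; simp
    · have hab' : a ≤ b := Nat.lt_succ_iff.mp h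
      have hb : b < p.length := hbl
      have hadj : G.Adj (p.getVert b) (p.getVert (b + 1)) := p.adj_getVert_succ hb
      have h1 : G.dist (p.getVert b) (p.getVert (b + 1)) ≤ 1 :=
        SimpleGraph.dist_le hadj.toWalk
      calc G.dist (p.getVert a) (p.getVert (b + 1))
          ≤ G.dist (p.getVert a) (p.getVert b) + G.dist (p.getVert b) (p.getVert (b + 1)) :=
            hG.dist_triangle
        _ ≤ (b - a) + 1 := Nat.add_le_add (ih hab' (le_of_lt hb)) h1
        _ = b + 1 - a := by omega

theorem stmt13 [Fintype V] (G : SimpleGraph V) (hG : G.Connected)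
    {x0 xs v0 vt : V} (D : G.Walk x0 xs) (hD : IsDiameter G D)
    (P : G.Walk v0 vt) (hP : IsShortestPath G P) (k : ℕ)
    (hecc : ∀ z : V, walkDist G z P ≤ k)
    (l m : ℕ) (hl : l ≤ P.length) (hm : m ≤ P.length) (hlm : l ≤ m)
    (hlx : G.dist (P.getVert l) x0 ≤ k) (hmx : G.dist (P.getVert m) xs ≤ k)
    (z : V) (i : ℕ) (hi : i ≤ P.length) (hzi : G.dist z (P.getVert i) ≤ k)
    (hno : ∀ a, a ≤ i → ¬ walkDist G (P.getVert a) D ≤ k) :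
    G.dist (P.getVert i) (P.getVert l) ≤ 2 * k ∧ G.dist z x0 ≤ 4 * k := by
  have hx0 : x0 ∈ D.support := D.start_mem_support
  have hwl : walkDist G (P.getVert l) D ≤ k :=
    le_trans (Nat.sInf_le ⟨x0, hx0, rfl⟩) hlx
  have hil : i < l := by
    by_contra h
    exact hno l (Nat.le_of_not_lt h) hwl
  have h5 : G.dist (P.getVert l) (P.getVert m) ≤ m - l := dist_getVert_le hG P l m hlm hm
  have h4 : G.dist x0 xs ≤ G.dist x0 (P.getVert l) + G.dist (P.getVert l) (P.getVert m)
      + G.dist (P.getVert m) xs :=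
    le_trans hG.dist_triangle (Nat.add_le_add_right hG.dist_triangle _)
  have hx0l : G.dist x0 (P.getVert l) = G.dist (P.getVert l) x0 := SimpleGraph.dist_comm ..
  have hchain : P.length ≤ k + (m - l) + k := by
    calc P.length = G.dist v0 vt := hP
      _ ≤ D.length := hD.2 v0 vt
      _ = G.dist x0 xs := hD.1
      _ ≤ G.dist x0 (P.getVert l) + G.dist (P.getVert l) (P.getVert m)
          + G.dist (P.getVert m) xs := h4
      _ ≤ k + (m - l) + k := by rw [hx0l]; exact Nat.add_le_add (Nat.add_le_add hlx h5) hmx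
  have hl2k : l ≤ 2 * k := by omega
  have hd1 : G.dist (P.getVert i) (P.getVert l) ≤ 2 * k :=
    le_trans (dist_getVert_le hG P i l hil.le hl) (by omega)
  refine ⟨hd1, ?_⟩
  have h6 : G.dist z x0 ≤ G.dist z (P.getVert i) + G.dist (P.getVert i) (P.getVert l)
      + G.dist (P.getVert l) x0 :=
    le_trans hG.dist_triangle (Nat.add_le_add_right hG.dist_triangle _)
  omega
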